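/- For every positive integer d that is not a perfect square, there exists a positive integer n such that the period length of the continued fraction expansion of n·√d equals 2. -/

import Mathlib

/-- Iteration of the Gauss-type map producing the complete quotients of the
continued fraction expansion of `α`. -/
noncomputable def cfIter (α : ℝ) : ℕ → ℝ
  | 0 => α
  | n + 1 => (Int.fract (cfIter α n))⁻¹

/-- The `n`-th partial quotient of the continued fraction of `α`. -/
noncomputable def cfTerm (α : ℝ) (n : ℕ) : ℤ := ⌊cfIter α n⌋

/-- `t` is an eventual period of the sequence `f`. -/
def EvPeriod (t : ℕ) (f : ℕ → ℤ) : Prop := ∃ N, ∀ n, N ≤ n → f (n + t) = f n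

/-- `periodLen α` is the length of the periodic part of the continued fraction
expansion of `α`: the least positive eventual period of its partial quotients. -/
noncomputable def periodLen (α : ℝ) : ℕ := sInf {t | 0 < t ∧ EvPeriod t (cfTerm α)}

/-- For every positive non-square integer `d` there is a positive integer `n`
with `D(n √d) = 2`. -/
lemma key (k : ℤ) (hk : 2 ≤ k) (α : ℝ) (hαpos : 0 < α)
    (hα2 : α ^ 2 = (k : ℝ) ^ 2 - 1) : periodLen α = 2 := by
  have hk2 : (2 : ℝ) ≤ (k : ℝ) := by exact_mod_cast hk
  -- basic bounds
  have hlt : α < (k : ℝ) :=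
    lt_of_pow_lt_pow_left₀ 2 (by linarith) (by nlinarith)
  have hgt : (k : ℝ) - 1 < α :=
    lt_of_pow_lt_pow_left₀ 2 hαpos.le (by nlinarith)
  have hgt' : (k : ℝ) - 1/2 < α :=
    lt_of_pow_lt_pow_left₀ 2 hαpos.le (by nlinarith)
  set β : ℝ := α - ((k : ℝ) - 1) with hβdef
  have hβpos : 0 < β := by simp [hβdef]; linarith
  have hβlt : β < 1 := by simp [hβdef]; linarith
  have hβ : β * (α + (k : ℝ) - 1) = 2 * (k : ℝ) - 2 := by
    have : β * (α + (k:ℝ) - 1) = α ^ 2 - ((k:ℝ) - 1) ^ 2 := by ring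
    rw [this, hα2]; ring
  -- floor of α
  have hfloor0 : ⌊α⌋ = k - 1 := by
    rw [Int.floor_eq_iff]
    constructor
    · push_cast; linarith
    · push_cast; linarith
  have hfract0 : Int.fract α = β := by
    rw [Int.fract, hfloor0]; push_cast; ring
  have hc1 : cfIter α 1 = β⁻¹ := by
    show (Int.fract (cfIter α 0))⁻¹ = β⁻¹
    rw [show cfIter α 0 = α from rfl, hfract0]
  -- floor of cfIter 1
  have hinv_ge : (1 : ℝ) ≤ β⁻¹ := by
    rw [le_inv_comm₀ one_pos hβpos]; simpa using hβlt.le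
  have hinv_lt : β⁻¹ < 2 := by
    rw [inv_lt_iff_one_lt_mul₀ hβpos]
    have : (1:ℝ)/2 < β := by simp [hβdef]; linarith
    linarith
  have hfloor1 : ⌊cfIter α 1⌋ = 1 := by
    rw [hc1, Int.floor_eq_iff] <;> push_cast <;> constructor <;> linarith
  have hc2 : cfIter α 2 = α + ((k : ℝ) - 1) := by
    show (Int.fract (cfIter α 1))⁻¹ = _
    rw [Int.fract, hfloor1, hc1]
    have hβne : β ≠ 0 := hβpos.ne'
    have hmul : ((β⁻¹ : ℝ) - (1 : ℤ)) * (α + ((k:ℝ) - 1)) = 1 := by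
      field_simp
      push_cast
      nlinarith [hβ]
    rw [inv_eq_of_mul_eq_one_right hmul]
  have hfract2 : Int.fract (cfIter α 2) = Int.fract α := by
    rw [hc2, show ((k:ℝ) - 1) = ((k - 1 : ℤ) : ℝ) by push_cast; ring,
      Int.fract_add_intCast]
  have hc3 : cfIter α 3 = cfIter α 1 := by
    show (Int.fract (cfIter α 2))⁻¹ = cfIter α 1
    rw [hfract2, hc1, hfract0]
  -- periodicity of cfIter from index 1
  have hper : ∀ m : ℕ, cfIter α (m + 3) = cfIter α (m + 1) := by
    intro m
    induction m with
    | zero => exact hc3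
    | succ n ih =>
      show (Int.fract (cfIter α (n + 3)))⁻¹ = (Int.fract (cfIter α (n + 1)))⁻¹
      rw [ih]
  have hterm_per : ∀ n : ℕ, 1 ≤ n → cfTerm α (n + 2) = cfTerm α n := by
    intro n hn
    obtain ⟨m, rfl⟩ := Nat.exists_eq_add_of_le hn
    unfold cfTerm
    rw [show 1 + m + 2 = m + 3 by ring, show 1 + m = m + 1 by ring, hper]
  -- values
  have hfloor2 : ⌊cfIter α 2⌋ = 2 * k - 2 := by
    rw [hc2, Int.floor_eq_iff] <;> push_cast <;> constructor <;> linarith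
  have hodd : ∀ m : ℕ, cfTerm α (2 * m + 1) = 1 := by
    intro m
    induction m with
    | zero => exact hfloor1
    | succ n ih =>
      rw [show 2 * (n + 1) + 1 = (2 * n + 1) + 2 by ring, hterm_per _ (by omega), ih]
  have heven : ∀ m : ℕ, cfTerm α (2 * m + 2) = 2 * k - 2 := by
    intro m
    induction m with
    | zero => exact hfloor2
    | succ n ih =>
      rw [show 2 * (n + 1) + 2 = (2 * n + 2) + 2 by ring, hterm_per _ (by omega), ih]
  -- conclude
  have h2 : 2 ∈ {t | 0 < t ∧ EvPeriod t (cfTerm α)} :=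
    ⟨two_pos, 1, fun n hn => hterm_per n hn⟩
  have h1 : 1 ∉ {t | 0 < t ∧ EvPeriod t (cfTerm α)} := by
    rintro ⟨-, N, hN⟩
    have := hN (2 * N + 1) (by omega)
    rw [show 2 * N + 1 + 1 = 2 * N + 2 by ring, hodd, heven] at this
    omega
  have hle := Nat.sInf_le h2
  have hmem := Nat.sInf_mem (⟨2, h2⟩ : Set.Nonempty {t | 0 < t ∧ EvPeriod t (cfTerm α)})
  unfold periodLen
  rcases Nat.lt_or_ge (sInf {t | 0 < t ∧ EvPeriod t (cfTerm α)}) 2 with h | h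
  · interval_cases h' : (sInf {t | 0 < t ∧ EvPeriod t (cfTerm α)})
    · exact absurd hmem (by rintro ⟨h0, -⟩; exact lt_irrefl 0 h0)
    · exact absurd hmem h1
  · omega

theorem stmt1 (d : ℕ) (hd : 0 < d) (hsq : ¬ IsSquare d) :
    ∃ n : ℕ, 0 < n ∧ periodLen ((n : ℝ) * Real.sqrt d) = 2 := by
  have hdz : ¬ IsSquare (d : ℤ) := by
    rintro ⟨r, hr⟩
    have := congrArg Int.natAbs hr
    simp [Int.natAbs_mul] at this
    exact hsq ⟨r.natAbs, this⟩
  obtain ⟨x, y, hxy, hy⟩ := Pell.exists_of_not_isSquare (by exact_mod_cast hd) hdz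
  refine ⟨y.natAbs, Int.natAbs_pos.mpr hy, ?_⟩
  set k : ℤ := (x.natAbs : ℤ) with hkdef
  have hk2 : x ^ 2 = k ^ 2 := by rw [hkdef]; push_cast; rw [sq_abs]
  have hy2 : y ^ 2 = (y.natAbs : ℤ) ^ 2 := by push_cast; rw [sq_abs]
  have hkey : k ^ 2 = (d : ℤ) * (y.natAbs : ℤ) ^ 2 + 1 := by
    rw [← hk2, ← hy2]; linarith
  have hd2 : 2 ≤ d := by
    rcases Nat.lt_or_ge d 2 with h | h
    · interval_cases d
      · exact absurd ⟨1, rfl⟩ hsq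
    · exact h
  have hk : 2 ≤ k := by
    have h1 : 1 ≤ (y.natAbs : ℤ) := by exact_mod_cast Int.natAbs_pos.mpr hy
    have h3 : 3 ≤ k ^ 2 := by nlinarith [hkey]
    have h0k : (0:ℤ) ≤ k := by positivity
    nlinarith [h3, h0k]
  have hna : (0:ℝ) < (y.natAbs : ℝ) := by
    exact_mod_cast Int.natAbs_pos.mpr hy
  apply key k hk
  · have : (0:ℝ) < Real.sqrt d := Real.sqrt_pos.mpr (by exact_mod_cast hd)
    positivity
  · have hs : Real.sqrt d ^ 2 = (d : ℝ) := Real.sq_sqrt (by positivity)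
    have hkr := congrArg (Int.cast : ℤ → ℝ) hkey
    push_cast at hkr
    rw [mul_pow, hs, hkr, Nat.cast_natAbs, Int.cast_abs]; ring
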